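/- arXiv:2304.07458 — 2 statements merged into one kernel-verified Lean document; each statement's English description precedes it below -/
import Mathlib

section
/- Let G_i = (V_i, E_i) be a subgraph with entry set V_i^I and exit set V_i^O. Suppose every path in G from a vertex outside G_i to a vertex outside G_i that passes through G_i must enter via some entry vertex and leave via some exit vertex. Replacing the internal edges E_i by shortcuts {(u,v) : u ∈ V_i^I, v ∈ V_i^O} with weight equal to the shortest internal distance from u to v preserves all shortest-path distances between vertices of V \ V_i. -/
open ENNReal

attribute [local instance] Classical.propDecidable

variable {V : Type*}

/-- The endpoint of a walk that starts at `u` and then visits the vertices in `p`. -/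
def walkEnd (u : V) : List V → V
  | [] => u
  | v :: p => walkEnd v p

/-- The weight of a walk starting at `u` and visiting the vertices of `p`, where
`W a b = ⊤` encodes the absence of an edge from `a` to `b`. -/
noncomputable def walkWeight (W : V → V → ℝ≥0∞) (u : V) : List V → ℝ≥0∞
  | [] => 0
  | v :: p => W u v + walkWeight W v p

/-- Shortest-walk (min-plus) distance: the infimum of walk weights from `u` to `v`
(`0` if `u = v`, `⊤` if there is no walk of finite weight). -/
noncomputable def wdist (W : V → V → ℝ≥0∞) (u v : V) : ℝ≥0∞ :=
  ⨅ p ∈ {p : List V | walkEnd u p = v}, walkWeight W u p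

lemma walkEnd_append (u : V) (s t : List V) :
    walkEnd u (s ++ t) = walkEnd (walkEnd u s) t := by
  induction s generalizing u with
  | nil => rfl
  | cons v s ih => simpa [walkEnd] using ih v

lemma walkWeight_append (W : V → V → ℝ≥0∞) (u : V) (s t : List V) :
    walkWeight W u (s ++ t) = walkWeight W u s + walkWeight W (walkEnd u s) t := by
  induction s generalizing u with
  | nil => simp [walkWeight, walkEnd]
  | cons v s ih => simp [walkWeight, walkEnd, ih, add_assoc]

lemma wdist_le (W : V → V → ℝ≥0∞) {u v : V} {p : List V} (h : walkEnd u p = v) :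
    wdist W u v ≤ walkWeight W u p :=
  iInf₂_le p h

lemma wdist_self_le (W : V → V → ℝ≥0∞) (u : V) : wdist W u u ≤ 0 :=
  wdist_le W (p := []) rfl

lemma wdist_le_edge (W : V → V → ℝ≥0∞) (u v : V) : wdist W u v ≤ W u v := by
  have := wdist_le W (u := u) (p := [v]) rfl
  simpa [walkWeight, walkEnd] using this

lemma wdist_triangle (W : V → V → ℝ≥0∞) (u v t : V) :
    wdist W u t ≤ wdist W u v + wdist W v t := by
  conv_rhs => rw [wdist, wdist]
  simp only [ENNReal.iInf_add, ENNReal.add_iInf]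
  refine le_iInf fun q => le_iInf fun hq => le_iInf fun p => le_iInf fun hp => ?_
  have hp' : walkEnd u p = v := hp
  have hq' : walkEnd v q = t := hq
  have hend : walkEnd u (p ++ q) = t := by rw [walkEnd_append, hp', hq']
  calc wdist W u t ≤ walkWeight W u (p ++ q) := wdist_le _ hend
    _ = walkWeight W u p + walkWeight W v q := by rw [walkWeight_append, hp']

lemma wdist_step (W : V → V → ℝ≥0∞) (u c t : V) :
    wdist W u t ≤ W u c + wdist W c t :=
  (wdist_triangle W u c t).trans (add_le_add_left (wdist_le_edge W u c) _)

lemma wdist_step' (W : V → V → ℝ≥0∞) (u c t : V) :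
    wdist W u t ≤ wdist W u c + W c t :=
  (wdist_triangle W u c t).trans (add_le_add_right (wdist_le_edge W c t) _)

lemma walkWeight_mono {W₁ W₂ : V → V → ℝ≥0∞} (h : ∀ a b, W₁ a b ≤ W₂ a b)
    (u : V) (p : List V) : walkWeight W₁ u p ≤ walkWeight W₂ u p := by
  induction p generalizing u with
  | nil => simp [walkWeight]
  | cons v q ih => exact add_le_add (h u v) (ih v)

lemma wdist_mono {W₁ W₂ : V → V → ℝ≥0∞} (h : ∀ a b, W₁ a b ≤ W₂ a b)
    (u v : V) : wdist W₁ u v ≤ wdist W₂ u v :=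
  le_iInf₂ fun p hp => (wdist_le W₁ hp).trans (walkWeight_mono h u p)

lemma wdist_le_wdist_of_le {W W' : V → V → ℝ≥0∞}
    (h : ∀ a b, wdist W a b ≤ W' a b) (x y : V) :
    wdist W x y ≤ wdist W' x y := by
  suffices H : ∀ (p : List V) (z : V), wdist W z (walkEnd z p) ≤ walkWeight W' z p by
    refine le_iInf₂ fun p hp => ?_
    have := H p x
    rwa [show walkEnd x p = y from hp] at this
  intro p
  induction p with
  | nil => exact fun z => wdist_self_le W z
  | cons c q ih =>
    intro z
    calc wdist W z (walkEnd c q) ≤ wdist W z c + wdist W c (walkEnd c q) :=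
          wdist_triangle W z c _
      _ ≤ W' z c + walkWeight W' c q := add_le_add (h z c) (ih c)
      _ = walkWeight W' z (c :: q) := rfl

/-- Replacing the internal edges of a subgraph `G_i` by shortcuts
from each entry vertex to each exit vertex, weighted by the internal shortest
distance, preserves all shortest-path distances between vertices outside `G_i`. -/
theorem stmt4 (E : Set (V × V)) (w : V → V → ℝ≥0∞) (Vi : Set V) :
    let W : V → V → ℝ≥0∞ := fun a b => if (a, b) ∈ E then w a b else ⊤
    let entry : Set V := {x | x ∈ Vi ∧ ∃ u, u ∉ Vi ∧ (u, x) ∈ E}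
    let exitV : Set V := {x | x ∈ Vi ∧ ∃ u, u ∉ Vi ∧ (x, u) ∈ E}
    -- internal edges of the subgraph
    let Wint : V → V → ℝ≥0∞ := fun a b =>
      if (a, b) ∈ E ∧ a ∈ Vi ∧ b ∈ Vi then w a b else ⊤
    -- contracted graph: internal edges removed, shortcuts entry → exit added
    let W' : V → V → ℝ≥0∞ := fun a b =>
      if a ∈ Vi ∧ b ∈ Vi then
        (if a ∈ entry ∧ b ∈ exitV then wdist Wint a b else ⊤)
      else W a b
    ∀ x y, x ∉ Vi → y ∉ Vi → wdist W' x y = wdist W x y := by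
  intro W entry exitV Wint W' x y hx hy
  have hW'l : ∀ a b : V, a ∉ Vi → W' a b = W a b := by
    intro a b ha; simp only [W']; rw [if_neg fun h => ha h.1]
  have hW'r : ∀ a b : V, b ∉ Vi → W' a b = W a b := by
    intro a b hb; simp only [W']; rw [if_neg fun h => hb h.2]
  have hWtop : ∀ a b : V, (a, b) ∉ E → W a b = ⊤ := by
    intro a b h; simp only [W]; rw [if_neg h]
  have hWint : ∀ a b : V, a ∈ Vi → b ∈ Vi → Wint a b = W a b := by
    intro a b ha hb
    by_cases h : (a, b) ∈ E
    · simp only [Wint, W]; rw [if_pos ⟨h, ha, hb⟩, if_pos h]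
    · simp only [Wint, W]; rw [if_neg fun h' => h h'.1, if_neg h]
  -- The key lemma for the `≤` direction.
  have key : ∀ (p : List V) (z : V), walkEnd z p ∉ Vi →
      (z ∉ Vi → wdist W' z (walkEnd z p) ≤ walkWeight W z p) ∧
      (∀ a, a ∈ entry → z ∈ Vi →
        wdist W' a (walkEnd z p) ≤ wdist Wint a z + walkWeight W z p) := by
    intro p
    induction p with
    | nil =>
      intro z hz
      exact ⟨fun _ => wdist_self_le _ _, fun a _ hzVi => absurd hzVi hz⟩
    | cons c q ih =>
      intro z hz
      have hz' : walkEnd c q ∉ Vi := hz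
      constructor
      · intro hzV
        by_cases hc : c ∈ Vi
        · by_cases he : (z, c) ∈ E
          · have hcE : c ∈ entry := ⟨hc, z, hzV, he⟩
            have h1 := (ih c hz').2 c hcE hc
            have h0 : wdist Wint c c ≤ 0 := wdist_self_le _ _
            calc wdist W' z (walkEnd c q)
                ≤ W' z c + wdist W' c (walkEnd c q) := wdist_step _ _ _ _
              _ ≤ W z c + (wdist Wint c c + walkWeight W c q) := by
                  rw [hW'l z c hzV]; exact add_le_add_right h1 _
              _ ≤ W z c + (0 + walkWeight W c q) :=
                  add_le_add_right (add_le_add_left h0 _) _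
              _ = walkWeight W z (c :: q) := by rw [zero_add]; rfl
          · have : W z c = ⊤ := hWtop z c he
            show _ ≤ walkWeight W z (c :: q)
            rw [show walkWeight W z (c :: q) = W z c + walkWeight W c q from rfl,
              this, top_add]
            exact le_top
        · have h1 := (ih c hz').1 hc
          calc wdist W' z (walkEnd c q)
              ≤ W' z c + wdist W' c (walkEnd c q) := wdist_step _ _ _ _
            _ ≤ W z c + walkWeight W c q := by
                rw [hW'r z c hc]; exact add_le_add_right h1 _
            _ = walkWeight W z (c :: q) := rfl
      · intro a ha hzVi
        by_cases hc : c ∈ Vi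
        · have h1 := (ih c hz').2 a ha hc
          have h2 : wdist Wint a c ≤ wdist Wint a z + W z c := by
            have := wdist_step' Wint a z c
            rwa [hWint z c hzVi hc] at this
          calc wdist W' a (walkEnd c q)
              ≤ wdist Wint a c + walkWeight W c q := h1
            _ ≤ (wdist Wint a z + W z c) + walkWeight W c q := add_le_add_left h2 _
            _ = wdist Wint a z + walkWeight W z (c :: q) := by
                rw [add_assoc]; rfl
        · by_cases he : (z, c) ∈ E
          · have hzO : z ∈ exitV := ⟨hzVi, c, hc, he⟩
            have hW'az : W' a z = wdist Wint a z := by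
              simp only [W']; rw [if_pos ⟨ha.1, hzVi⟩, if_pos ⟨ha, hzO⟩]
            have h1 := (ih c hz').1 hc
            calc wdist W' a (walkEnd c q)
                ≤ W' a z + wdist W' z (walkEnd c q) := wdist_step _ _ _ _
              _ ≤ W' a z + (W' z c + wdist W' c (walkEnd c q)) :=
                  add_le_add_right (wdist_step _ _ _ _) _
              _ ≤ wdist Wint a z + (W z c + walkWeight W c q) := by
                  rw [hW'az, hW'r z c hc]
                  exact add_le_add_right (add_le_add_right h1 _) _
              _ = wdist Wint a z + walkWeight W z (c :: q) := rfl
          · have htop : W z c = ⊤ := hWtop z c he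
            have : walkWeight W z (c :: q) = ⊤ := by
              rw [show walkWeight W z (c :: q) = W z c + walkWeight W c q from rfl,
                htop, top_add]
            rw [this, add_top]
            exact le_top
  refine le_antisymm ?_ ?_
  · refine le_iInf₂ fun p hp => ?_
    have hp' : walkEnd x p = y := hp
    have hend : walkEnd x p ∉ Vi := hp' ▸ hy
    have := (key p x hend).1 hx
    rwa [hp'] at this
  · refine wdist_le_wdist_of_le ?_ x y
    intro a b
    simp only [W']
    split_ifs with h1 h2
    · refine le_trans (wdist_mono ?_ a b) le_rfl
      intro u v
      by_cases h : (u, v) ∈ E ∧ u ∈ Vi ∧ v ∈ Vi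
      · simp only [W, Wint]; rw [if_pos h, if_pos h.1]
      · simp only [Wint]; rw [if_neg h]; exact le_top
    · exact le_top
    · exact wdist_le_edge W a b
end

section
/- With the setup of accumulative PageRank (damping d ∈ (0,1), every vertex with out-degree N_u ≥ 1), the limit vertex states x_v = Σ_{k≥0} (sum of round-k messages arriving at v) satisfy the PageRank fixed-point equation: x_v = (1 − d) + d · Σ_{(u,v) ∈ E} x_u / N_u for every vertex v. -/
/-- In accumulative PageRank (damping `d ∈ (0,1)`, every vertex
with out-degree `N u ≥ 1`), the limit vertex states
`x v = ∑ₖ (sum of round-k messages arriving at v)` satisfy the PageRank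
fixed-point equation `x v = (1 - d) + d * ∑_{(u,v) ∈ E} x u / N u`. -/
theorem stmt6 {V : Type*} [Fintype V] (E : V → V → Prop) [DecidableRel E]
    (d : ℝ) (hd0 : 0 < d) (hd1 : d < 1)
    (N : V → ℕ)
    (hN : ∀ u, N u = Finset.card {v : V | E u v}.toFinset)
    (hN1 : ∀ u, 1 ≤ N u)
    (msg : ℕ → V → ℝ)
    (h0 : ∀ v, msg 0 v = 1 - d)
    (hrec : ∀ k v, msg (k + 1) v = ∑ u ∈ {u : V | E u v}.toFinset, d * msg k u / (N u : ℝ)) :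
    ∀ v, (∑' k, msg k v) =
      (1 - d) + d * ∑ u ∈ {u : V | E u v}.toFinset, (∑' k, msg k u) / (N u : ℝ) := by
  have hNpos : ∀ u, (0 : ℝ) < (N u : ℝ) := fun u => by
    exact_mod_cast Nat.lt_of_lt_of_le Nat.zero_lt_one (hN1 u)
  -- nonnegativity
  have hnn : ∀ k v, 0 ≤ msg k v := by
    intro k
    induction k with
    | zero => intro v; rw [h0]; linarith
    | succ k ih =>
      intro v
      rw [hrec]
      apply Finset.sum_nonneg
      intro u _
      exact div_nonneg (mul_nonneg hd0.le (ih u)) (Nat.cast_nonneg _)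
  -- total sum per round
  have htot : ∀ k, ∑ v, msg k v = (1 - d) * d ^ k * (Fintype.card V : ℝ) := by
    intro k
    induction k with
    | zero =>
      simp [h0, Finset.sum_const, Finset.card_univ, mul_comm]
      ring
    | succ k ih =>
      have : ∑ v, msg (k + 1) v = ∑ v, ∑ u, if E u v then d * msg k u / (N u : ℝ) else 0 := by
        refine Finset.sum_congr rfl fun v _ => ?_
        rw [hrec, ← Finset.sum_filter]
        congr 1
        ext u
        simp [Set.mem_toFinset]
      rw [this, Finset.sum_comm]
      have h2 : ∀ u, (∑ v, if E u v then d * msg k u / (N u : ℝ) else 0) = d * msg k u := by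
        intro u
        rw [← Finset.sum_filter, Finset.sum_const, nsmul_eq_mul]
        have hcard : (Finset.filter (fun v => E u v) Finset.univ).card = N u := by
          rw [hN u]
          congr 1
          ext v
          simp [Set.mem_toFinset]
        rw [hcard, mul_comm]
        exact div_mul_cancel₀ _ (hNpos u).ne'
      rw [Finset.sum_congr rfl fun u _ => h2 u, ← Finset.mul_sum, ih]
      ring
  -- pointwise bound
  have hbd : ∀ k v, msg k v ≤ (1 - d) * (Fintype.card V : ℝ) * d ^ k := by
    intro k v
    have : msg k v ≤ ∑ v, msg k v :=
      Finset.single_le_sum (fun u _ => hnn k u) (Finset.mem_univ v)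
    rw [htot k] at this
    linarith [this]
  -- summability
  have hsumm : ∀ v, Summable (fun k => msg k v) := by
    intro v
    apply Summable.of_nonneg_of_le (fun k => hnn k v) (fun k => hbd k v)
    exact (summable_geometric_of_lt_one hd0.le hd1).mul_left _
  intro v
  rw [Summable.tsum_eq_zero_add (hsumm v), h0]
  congr 1
  have hterm : ∀ k, msg (k + 1) v = ∑ u ∈ {u : V | E u v}.toFinset, d * msg k u / (N u : ℝ) :=
    fun k => hrec k v
  calc ∑' k, msg (k + 1) v
      = ∑' k, ∑ u ∈ {u : V | E u v}.toFinset, d * msg k u / (N u : ℝ) := by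
        exact tsum_congr hterm
    _ = ∑ u ∈ {u : V | E u v}.toFinset, ∑' k, d * msg k u / (N u : ℝ) := by
        rw [Summable.tsum_finsetSum]
        intro u _
        apply Summable.div_const
        exact (hsumm u).mul_left d
    _ = d * ∑ u ∈ {u : V | E u v}.toFinset, (∑' k, msg k u) / (N u : ℝ) := by
        rw [Finset.mul_sum]
        refine Finset.sum_congr rfl fun u _ => ?_
        rw [← tsum_div_const, ← tsum_mul_left]
        exact tsum_congr fun k => by ring
end
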